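/- Let F be a field and S an F-vector space which is the internal direct sum of three nonzero subspaces U, V, W. Let W′ be a subspace with V ⊓ W′ = ⊥ and V ⊔ W′ = V ⊔ W, with W′ ≠ W. Fix λ ∈ F with λ ≠ 0 and λ ≠ 1, and let β be the linear automorphism of S determined by β(y) = λ·y for y ∈ U ⊔ V and β(w′) = w′ for w′ ∈ W′. Set P := U ⊔ W. Then for every integer k, if β^k maps P into P, then β^k is the identity of S. -/

import Mathlib

theorem stmt11 {F : Type*} [Field F] {S : Type*} [AddCommGroup S] [Module F S]
    (U V W : Submodule F S) (hU : U ≠ ⊥) (hV : V ≠ ⊥) (hW : W ≠ ⊥)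
    (htop : U ⊔ V ⊔ W = ⊤) (hUdisj : U ⊓ (V ⊔ W) = ⊥) (hVW : V ⊓ W = ⊥)
    (W' : Submodule F S) (hW'i : V ⊓ W' = ⊥) (hW's : V ⊔ W' = V ⊔ W) (hW'ne : W' ≠ W)
    (lam : F) (hlam0 : lam ≠ 0) (hlam1 : lam ≠ 1)
    (β : S ≃ₗ[F] S)
    (hβUV : ∀ y ∈ U ⊔ V, β y = lam • y) (hβW' : ∀ w ∈ W', β w = w) :
    ∀ k : ℤ, (∀ x ∈ U ⊔ W, (β ^ k) x ∈ U ⊔ W) → β ^ k = 1 := by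
  -- β⁻¹ on U ⊔ V
  have hβinv : ∀ y ∈ U ⊔ V, β.symm y = lam⁻¹ • y := by
    intro y hy
    have : β (lam⁻¹ • y) = y := by
      rw [hβUV _ (Submodule.smul_mem _ _ hy), smul_smul, mul_inv_cancel₀ hlam0, one_smul]
    have := congrArg β.symm this
    rw [β.symm_apply_apply] at this
    exact this.symm
  have hβinvW' : ∀ w ∈ W', β.symm w = w := by
    intro w hw
    have := congrArg β.symm (hβW' w hw)
    rw [β.symm_apply_apply] at this
    exact this.symm
  -- action of β^k
  have key : ∀ k : ℤ, (∀ y ∈ U ⊔ V, (β ^ k) y = lam ^ k • y) ∧ (∀ w ∈ W', (β ^ k) w = w) := by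
    intro k
    induction k using Int.induction_on with
    | zero => simp
    | succ n ih =>
      constructor
      · intro y hy
        have h1 : ((n : ℤ) + 1 : ℤ) = (n : ℤ) + 1 := rfl
        rw [zpow_add_one]
        have : (β ^ (n : ℤ) * β) y = (β ^ (n : ℤ)) (β y) := rfl
        rw [this, hβUV y hy, map_smul, ih.1 y hy, smul_smul, mul_comm, ← zpow_add_one₀ hlam0]
      · intro w hw
        rw [zpow_add_one]
        have : (β ^ (n : ℤ) * β) w = (β ^ (n : ℤ)) (β w) := rfl
        rw [this, hβW' w hw, ih.2 w hw]
    | pred n ih =>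
      constructor
      · intro y hy
        rw [zpow_sub_one]
        have : (β ^ (-(n : ℤ)) * β⁻¹) y = (β ^ (-(n : ℤ))) (β.symm y) := rfl
        rw [this, hβinv y hy, map_smul, ih.1 y hy, smul_smul, mul_comm, ← zpow_sub_one₀ hlam0]
      · intro w hw
        rw [zpow_sub_one]
        have : (β ^ (-(n : ℤ)) * β⁻¹) w = (β ^ (-(n : ℤ))) (β.symm w) := rfl
        rw [this, hβinvW' w hw, ih.2 w hw]
  -- find w ∈ W \ W'
  have hVP : V ⊓ (U ⊔ W) = ⊥ := by
    rw [Submodule.eq_bot_iff]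
    rintro x ⟨hxV, hxUW⟩
    obtain ⟨u, hu, w, hw, rfl⟩ := Submodule.mem_sup.mp hxUW
    have huU : u ∈ U := hu
    have : u ∈ U ⊓ (V ⊔ W) := ⟨hu, by
      have : u = (u + w) - w := by abel
      rw [this]
      exact Submodule.sub_mem _ (Submodule.mem_sup_left hxV) (Submodule.mem_sup_right hw)⟩
    rw [hUdisj] at this
    have hu0 : u = 0 := this
    subst hu0
    rw [zero_add] at hxV ⊢
    have : w ∈ V ⊓ W := ⟨hxV, hw⟩
    rw [hVW] at this
    exact this
  have hex : ∃ w ∈ W, w ∉ W' := by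
    by_contra h
    push_neg at h
    apply hW'ne
    apply le_antisymm
    · intro w' hw'
      have : w' ∈ V ⊔ W := hW's ▸ Submodule.mem_sup_right hw'
      obtain ⟨v, hv, w, hw, rfl⟩ := Submodule.mem_sup.mp this
      have : v ∈ V ⊓ W' := ⟨hv, by
        have : v = (v + w) - w := by abel
        rw [this]
        exact Submodule.sub_mem _ hw' (h w hw)⟩
      rw [hW'i] at this
      have hv0 : v = 0 := this
      subst hv0
      rw [zero_add]
      exact hw
    · exact fun w hw => h w hw
  intro k hP
  obtain ⟨w, hwW, hwW'⟩ := hex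
  have hwVW' : w ∈ V ⊔ W' := hW's ▸ Submodule.mem_sup_right hwW
  obtain ⟨v, hv, w', hw', hvw⟩ := Submodule.mem_sup.mp hwVW'
  have hv0 : v ≠ 0 := by
    rintro rfl
    rw [zero_add] at hvw
    exact hwW' (hvw ▸ hw')
  -- β^k w = lam^k • v + w'
  have hβkw : (β ^ k) w = lam ^ k • v + w' := by
    rw [← hvw, map_add, (key k).1 v (Submodule.mem_sup_right hv), (key k).2 w' hw']
  have hwP : w ∈ U ⊔ W := Submodule.mem_sup_right hwW
  have hdiff : (lam ^ k - 1) • v ∈ U ⊔ W := by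
    have h1 : (β ^ k) w - w ∈ U ⊔ W := Submodule.sub_mem _ (hP w hwP) hwP
    have h2 : (β ^ k) w - w = (lam ^ k - 1) • v := by
      rw [hβkw, ← hvw]; rw [sub_smul, one_smul]; abel
    rwa [h2] at h1
  have hvmem : (lam ^ k - 1) • v ∈ V := Submodule.smul_mem _ _ hv
  have : (lam ^ k - 1) • v ∈ V ⊓ (U ⊔ W) := ⟨hvmem, hdiff⟩
  rw [hVP] at this
  have hlamk : lam ^ k = 1 := by
    by_contra hne
    have : (lam ^ k - 1) ≠ 0 := sub_ne_zero.mpr hne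
    exact hv0 (by
      have h0 : (lam ^ k - 1) • v = 0 := ‹(lam ^ k - 1) • v ∈ (⊥ : Submodule F S)›
      exact (smul_eq_zero.mp h0).resolve_left this)
  -- conclude β^k = 1
  have htop' : U ⊔ V ⊔ W' = ⊤ := by
    rw [sup_assoc, hW's, ← sup_assoc, htop]
  ext x
  have hx : x ∈ U ⊔ V ⊔ W' := htop' ▸ Submodule.mem_top
  obtain ⟨a, ha, b, hb, rfl⟩ := Submodule.mem_sup.mp hx
  have : (β ^ k) (a + b) = lam ^ k • a + b := by
    rw [map_add, (key k).1 a ha, (key k).2 b hb]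
  rw [this, hlamk, one_smul]
  rfl
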